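/- Let b be a κ-contracting geodesic ray with contracting constant c in a proper CAT(0) space. Then the κ-lower divergence of b satisfies div_κ(r) ≥ r²/(4c) − r for every r > 0; in particular, the κ-lower divergence of b is at least quadratic. -/

import Mathlib

open Set Metric Filter ENNReal

noncomputable section

/-- The set of points lying on a geodesic from `x` to `y`; in a uniquely geodesic space
(such as a CAT(0) space) this is the geodesic segment `[x,y]`. -/
def seg {X : Type*} [MetricSpace X] (x y : X) : Set X :=
  {z | dist x z + dist z y = dist x y}

/-- `X` is a geodesic metric space. -/
def GeodesicSpace (X : Type*) [MetricSpace X] : Prop :=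
  ∀ x y : X, ∃ γ : ℝ → X, γ 0 = x ∧ γ (dist x y) = y ∧
    ∀ s ∈ Icc (0:ℝ) (dist x y), ∀ t ∈ Icc (0:ℝ) (dist x y), dist (γ s) (γ t) = |s - t|

/-- `X` is a CAT(0) space: a geodesic metric space satisfying the CN (Bruhat–Tits)
inequality (comparison of triangles with Euclidean ones). -/
def IsCAT0 (X : Type*) [MetricSpace X] : Prop :=
  GeodesicSpace X ∧ ∀ x y z m : X, dist y m = dist y z / 2 → dist m z = dist y z / 2 →
    dist x m ^ 2 ≤ (dist x y ^ 2 + dist x z ^ 2) / 2 - dist y z ^ 2 / 4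

/-- `b` restricted to `[0,∞)` is a geodesic ray (an isometric embedding of `[0,∞)`). -/
def IsGeodesicRay {X : Type*} [MetricSpace X] (b : ℝ → X) : Prop :=
  ∀ s t : ℝ, 0 ≤ s → 0 ≤ t → dist (b s) (b t) = |s - t|

/-- The image of the geodesic ray `b`. -/
def rayIm {X : Type*} [MetricSpace X] (b : ℝ → X) : Set X := b '' Ici 0

/-- `κ` is a sublinear function: monotone increasing, concave, `≥ 1`, with `κ(t)/t → 0`. -/
structure IsSublinearFn (κ : ℝ → ℝ) : Prop where
  one_le : ∀ t : ℝ, 1 ≤ κ t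
  mono : Monotone κ
  concave : ConcaveOn ℝ (Ici 0) κ
  sublinear : Tendsto (fun t => κ t / t) atTop (nhds 0)

/-- `π` is the nearest-point projection onto the geodesic ray `b`:
`π x` lies on `b` and realizes the distance from `x` to `b`. -/
def IsProj {X : Type*} [MetricSpace X] (b : ℝ → X) (π : X → X) : Prop :=
  ∀ x : X, π x ∈ rayIm b ∧ dist x (π x) = infDist x (rayIm b)

/-- The geodesic ray `b` (with projection `π`) is `κ`-contracting: there is `c ≥ 0` such
that whenever `d(x,y) ≤ d(x,b)` we have `d(x_b, y_b) ≤ c·κ(‖x‖)`. -/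
def KappaContracting {X : Type*} [MetricSpace X] (κ : ℝ → ℝ) (o : X) (b : ℝ → X)
    (π : X → X) : Prop :=
  ∃ c ≥ (0:ℝ), ∀ x y : X, dist x y ≤ infDist x (rayIm b) →
    dist (π x) (π y) ≤ c * κ (dist o x)

/-- `b` is `κ`-contracting with contracting constant `c` (projection form, Lemma 2.6):
whenever `d(x,y) < d(x,b)` we have `d(x_b, y_b) ≤ c·κ(‖x_b‖)`. -/
def KappaContractingWith {X : Type*} [MetricSpace X] (κ : ℝ → ℝ) (o : X) (b : ℝ → X)
    (π : X → X) (c : ℝ) : Prop :=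
  0 ≤ c ∧ ∀ x y : X, dist x y < infDist x (rayIm b) →
    dist (π x) (π y) ≤ c * κ (dist o (π x))

/-- The set of (continuous, rectifiable-or-not) paths from `b(t - r·κ(t))` to
`b(t + r·κ(t))` avoiding the open ball of radius `r·κ(t)` about `b(t)`. -/
def pathsOutside {X : Type*} [MetricSpace X] (κ : ℝ → ℝ) (b : ℝ → X) (r t : ℝ) :
    Set (ℝ → X) :=
  {γ | ContinuousOn γ (Icc 0 1) ∧ γ 0 = b (t - r * κ t) ∧ γ 1 = b (t + r * κ t) ∧
       ∀ s ∈ Icc (0:ℝ) 1, γ s ∉ ball (b t) (r * κ t)}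

/-- `ρ_κ(r,t)`: the infimum of the lengths of paths from `b(t - r·κ(t))` to
`b(t + r·κ(t))` lying outside the open ball of radius `r·κ(t)` about `b(t)`
(`∞` if there is no such path). -/
noncomputable def rhoKappa {X : Type*} [MetricSpace X] (κ : ℝ → ℝ) (b : ℝ → X)
    (r t : ℝ) : ℝ≥0∞ :=
  ⨅ γ ∈ pathsOutside κ b r t, eVariationOn γ (Icc 0 1)

/-- The κ-lower divergence `div_κ(r) = inf_{t > r·κ(t)} ρ_κ(r,t)/κ(t)`. -/
noncomputable def divKappa {X : Type*} [MetricSpace X] (κ : ℝ → ℝ) (b : ℝ → X)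
    (r : ℝ) : ℝ≥0∞ :=
  ⨅ t ∈ {t : ℝ | r * κ t < t}, rhoKappa κ b r t / ENNReal.ofReal (κ t)

namespace SLDivAux

/-- clamped identity: equals `0` for `u ≤ p`, `u - p` on `[p,q]`, `q - p` for `u ≥ q`. -/
def clamp (p q u : ℝ) : ℝ := min u q - min u p

lemma min_sub_min_le {u v z : ℝ} (huv : u ≤ v) : min v z - min u z ≤ v - u := by
  simp only [min_def]; split_ifs <;> linarith

lemma min_sub_min_nonneg {u v z : ℝ} (huv : u ≤ v) : 0 ≤ min v z - min u z := by
  simp only [min_def]; split_ifs <;> linarith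

lemma min_sub_min_mono {u v z z' : ℝ} (huv : u ≤ v) (hz : z ≤ z') :
    min v z - min u z ≤ min v z' - min u z' := by
  simp only [min_def]; split_ifs <;> linarith

lemma clamp_eq_zero {p q u : ℝ} (hpq : p ≤ q) (hup : u ≤ p) : clamp p q u = 0 := by
  simp only [clamp, min_def]; split_ifs <;> linarith

lemma clamp_eq_full {p q u : ℝ} (hpq : p ≤ q) (hqu : q ≤ u) : clamp p q u = q - p := by
  simp only [clamp, min_def]; split_ifs <;> linarith

lemma clamp_nonneg {p q u : ℝ} (hpq : p ≤ q) : 0 ≤ clamp p q u := by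
  simp only [clamp, min_def]; split_ifs <;> linarith

lemma clamp_le_full {p q u : ℝ} (hpq : p ≤ q) : clamp p q u ≤ q - p := by
  simp only [clamp, min_def]; split_ifs <;> linarith

lemma clamp_le_sub {p q u : ℝ} : clamp p q u ≤ max 0 (u - p) := by
  simp only [clamp, min_def, max_def]; split_ifs <;> linarith

lemma clamp_mono {p q u v : ℝ} (hpq : p ≤ q) (huv : u ≤ v) :
    clamp p q u ≤ clamp p q v := by
  simp only [clamp, min_def]; split_ifs <;> linarith

lemma clamp_diff_le {p q u v : ℝ} (hpq : p ≤ q) :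
    clamp p q v - clamp p q u ≤ |v - u| := by
  rcases le_total u v with h | h
  · have h1 := min_sub_min_le (z := q) h
    have h2 := min_sub_min_nonneg (z := p) h
    have h3 : v - u ≤ |v - u| := le_abs_self _
    simp only [clamp]; linarith
  · have h1 := clamp_mono (u := v) (v := u) hpq h
    have h2 : (0:ℝ) ≤ |v - u| := abs_nonneg _
    linarith

/-- The weight-accumulation function used in the divergence lower bound. -/
def Gf (t R σ u : ℝ) : ℝ :=
  (R/3) * clamp (t - 2*R/3) (t - R/3) u
  + (2*R/3 - 2*σ) * clamp (t - R/3) (t + R/3) u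
  + (R/3) * clamp (t + R/3) (t + 2*R/3) u

lemma Gf_eq_zero {t R σ u : ℝ} (hR : 0 ≤ R) (hu : u ≤ t - 2*R/3) :
    Gf t R σ u = 0 := by
  rw [Gf, clamp_eq_zero (by linarith) hu, clamp_eq_zero (by linarith) (by linarith),
    clamp_eq_zero (by linarith) (by linarith)]
  ring

lemma Gf_eq_max {t R σ u : ℝ} (hR : 0 ≤ R) (hu : t + 2*R/3 ≤ u) :
    Gf t R σ u = 2*R^2/3 - 4*σ*R/3 := by
  rw [Gf, clamp_eq_full (by linarith) (by linarith), clamp_eq_full (by linarith) (by linarith),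
    clamp_eq_full (by linarith) hu]
  ring

lemma Gf_le_max {t R σ u : ℝ} (hσ : 0 ≤ σ) (h12 : 12*σ ≤ R) :
    Gf t R σ u ≤ 2*R^2/3 - 4*σ*R/3 := by
  have hR : 0 ≤ R := by linarith
  have h1 := clamp_le_full (u := u) (p := t - 2*R/3) (q := t - R/3) (by linarith)
  have h2 := clamp_le_full (u := u) (p := t - R/3) (q := t + R/3) (by linarith)
  have h3 := clamp_le_full (u := u) (p := t + R/3) (q := t + 2*R/3) (by linarith)
  have n1 := clamp_nonneg (u := u) (p := t - 2*R/3) (q := t - R/3) (by linarith : t - 2*R/3 ≤ t - R/3)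
  have n2 := clamp_nonneg (u := u) (p := t - R/3) (q := t + R/3) (by linarith : t - R/3 ≤ t + R/3)
  have n3 := clamp_nonneg (u := u) (p := t + R/3) (q := t + 2*R/3) (by linarith : t + R/3 ≤ t + 2*R/3)
  have w1 : (0:ℝ) ≤ R/3 := by linarith
  have w2 : (0:ℝ) ≤ 2*R/3 - 2*σ := by linarith
  rw [Gf]
  nlinarith [mul_le_mul_of_nonneg_left h1 w1, mul_le_mul_of_nonneg_left h2 w2,
    mul_le_mul_of_nonneg_left h3 w1]

lemma Gf_mono {t R σ u v : ℝ} (hσ : 0 ≤ σ) (h12 : 12*σ ≤ R) (huv : u ≤ v) :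
    Gf t R σ u ≤ Gf t R σ v := by
  have hR : 0 ≤ R := by linarith
  have h1 := clamp_mono (p := t - 2*R/3) (q := t - R/3) (by linarith) huv
  have h2 := clamp_mono (p := t - R/3) (q := t + R/3) (by linarith) huv
  have h3 := clamp_mono (p := t + R/3) (q := t + 2*R/3) (by linarith) huv
  have w1 : (0:ℝ) ≤ R/3 := by linarith
  have w2 : (0:ℝ) ≤ 2*R/3 - 2*σ := by linarith
  rw [Gf, Gf]
  nlinarith [mul_le_mul_of_nonneg_left h1 w1, mul_le_mul_of_nonneg_left h2 w2,
    mul_le_mul_of_nonneg_left h3 w1]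

lemma Gf_lip {t R σ u v : ℝ} (hσ : 0 ≤ σ) (h12 : 12*σ ≤ R) :
    Gf t R σ v - Gf t R σ u ≤ (2*R/3 - 2*σ) * |v - u| := by
  have w2 : (0:ℝ) ≤ 2*R/3 - 2*σ := by linarith
  rcases le_total u v with h | h
  · have hA0 : 0 ≤ min v (t - 2*R/3) - min u (t - 2*R/3) := min_sub_min_nonneg h
    have hAB := min_sub_min_mono (u := u) (v := v) h (by linarith : t - 2*R/3 ≤ t - R/3)
    have hBC := min_sub_min_mono (u := u) (v := v) h (by linarith : t - R/3 ≤ t + R/3)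
    have hCD := min_sub_min_mono (u := u) (v := v) h (by linarith : t + R/3 ≤ t + 2*R/3)
    have hD := min_sub_min_le (u := u) (v := v) (z := t + 2*R/3) h
    have habs : |v - u| = v - u := abs_of_nonneg (by linarith)
    rw [habs]
    simp only [Gf, clamp]
    nlinarith [hA0, hAB, hBC, hCD, hD]
  · have h1 := Gf_mono (t := t) (R := R) (σ := σ) hσ h12 h
    have h2 : (0:ℝ) ≤ |v - u| := abs_nonneg _
    nlinarith [mul_nonneg w2 h2]

lemma Gf_left {t R σ u : ℝ} (hR : 0 ≤ R) (hu : u ≤ t - R/3) :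
    Gf t R σ u = (R/3) * clamp (t - 2*R/3) (t - R/3) u := by
  rw [Gf, clamp_eq_zero (p := t - R/3) (q := t + R/3) (by linarith) hu,
    clamp_eq_zero (p := t + R/3) (q := t + 2*R/3) (by linarith) (by linarith)]
  ring

lemma Gf_right {t R σ u : ℝ} (hR : 0 ≤ R) (hu : t + R/3 ≤ u) :
    Gf t R σ u = (R/3)*(R/3) + (2*R/3 - 2*σ)*(2*R/3)
      + (R/3) * clamp (t + R/3) (t + 2*R/3) u := by
  rw [Gf, clamp_eq_full (by linarith) (by linarith), clamp_eq_full (by linarith) hu]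
  ring


set_option maxHeartbeats 1000000 in
/-- The key one-step estimate. -/
lemma step_bound {R σ t u v i d : ℝ} (hσ : 0 < σ) (h12 : 12*σ ≤ R)
    (hFm : R ≤ i + |u - t|)
    (hF3 : |v - u| ≤ 2*i + 2*d)
    (hK1 : d < i → u ≤ t → |v - u| ≤ σ)
    (hK2 : d < i → u ≤ t + 2*R/3 → |v - u| ≤ 2*σ)
    (hi : 0 ≤ i) (hd0 : 0 ≤ d)
    (hd : d ≤ max ((9/10) * min i R) (9*σ/40)) :
    Gf t R σ v - Gf t R σ u ≤ (20*σ/9) * max ((9/10) * min i R) (9*σ/40) := by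
  have hR : 0 < R := by linarith
  set E := max ((9/10) * min i R) (9*σ/40) with hEdef
  have hE1 : (9*σ/40 : ℝ) ≤ E := le_max_right _ _
  have hE0 : (0:ℝ) ≤ E := le_trans (by linarith) hE1
  have hc9 : (0:ℝ) ≤ 20*σ/9 := by linarith
  have hw1 : (0:ℝ) ≤ R/3 := by linarith
  have hw2 : (0:ℝ) ≤ 2*R/3 - 2*σ := by linarith
  have hRHS0 : 0 ≤ (20*σ/9) * E := mul_nonneg hc9 hE0
  have habs1 : u - t ≤ |u - t| := le_abs_self _
  have habs2 : -(u - t) ≤ |u - t| := neg_le_abs _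
  have habs3 : v - u ≤ |v - u| := le_abs_self _
  have habs4 : -(v - u) ≤ |v - u| := neg_le_abs _
  have hminl : min i R ≤ i := min_le_left _ _
  have hmin0 : (0:ℝ) ≤ min i R := le_min hi hR.le
  have hσσ : σ*σ ≤ σ*(R/12) := mul_le_mul_of_nonneg_left (by linarith) hσ.le
  rcases le_or_gt i (9*σ/40) with hA | hB
  · -- near-ray case: the step cannot move the projection into the support of `Gf`
    have hEA : E ≤ 9*σ/40 := max_le (by linarith) le_rfl
    have hd' : d ≤ 9*σ/40 := hd.trans hEA
    have hJ : |v - u| ≤ σ := by linarith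
    have hm : R - 9*σ/40 ≤ |u - t| := by linarith
    rcases le_or_gt u t with hul | hur
    · have hmu : |u - t| = t - u := by rw [abs_of_nonpos (by linarith)]; ring
      rw [hmu] at hm
      have hu' : u ≤ t - 2*R/3 := by linarith
      have hv' : v ≤ t - 2*R/3 := by linarith
      rw [Gf_eq_zero (u := v) hR.le hv', Gf_eq_zero (u := u) hR.le hu']
      linarith
    · have hmu : |u - t| = u - t := abs_of_nonneg (by linarith)
      rw [hmu] at hm
      have hu' : t + 2*R/3 ≤ u := by linarith
      have hv' : t + 2*R/3 ≤ v := by linarith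
      rw [Gf_eq_max (u := v) hR.le hv', Gf_eq_max (u := u) hR.le hu']
      linarith
  · -- main case: contraction applies
    have hdi : d < i := by
      have h2 : E < i := max_lt (by linarith) hB
      linarith
    rcases le_or_gt u t with hul | hur
    · -- projection parameter left of (or at) `t`
      have hJ : |v - u| ≤ σ := hK1 hdi hul
      have hmu : |u - t| = t - u := by rw [abs_of_nonpos (by linarith)]; ring
      rw [hmu] at hFm
      rcases le_or_gt u (t - 2*R/3 - σ) with h1a | h1b
      · have hv' : v ≤ t - 2*R/3 := by linarith
        rw [Gf_eq_zero (u := v) hR.le hv', Gf_eq_zero (u := u) hR.le (by linarith)]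
        linarith
      rcases le_or_gt u (t - 2*R/3) with h1bb | h1c
      · -- entering the support from the left
        have hGu : Gf t R σ u = 0 := Gf_eq_zero hR.le h1bb
        have hv2 : v ≤ t - R/3 := by linarith
        have hGv : Gf t R σ v ≤ (R/3) * σ := by
          rw [Gf_left hR.le hv2]
          have h1 : clamp (t - 2*R/3) (t - R/3) v ≤ max 0 (v - (t - 2*R/3)) := clamp_le_sub
          have h2 : max 0 (v - (t - 2*R/3)) ≤ σ := max_le hσ.le (by linarith)
          exact mul_le_mul_of_nonneg_left (h1.trans h2) hw1
        have hElb : (9/10) * (R/4) ≤ E := by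
          refine le_trans ?_ (le_max_left _ _)
          have hiR : R/4 ≤ min i R := le_min (by linarith) (by linarith)
          linarith
        have hmul := mul_le_mul_of_nonneg_left hElb hc9
        have hq : (20*σ/9) * ((9/10) * (R/4)) = σ*(R/2) := by ring
        rw [hq] at hmul
        linarith
      · rcases le_or_gt (t - R/3 - 2*σ) u with h1ci | h1cii
        · -- central zone: use the global Lipschitz bound
          have hG := Gf_lip (t := t) (u := u) (v := v) hσ.le h12
          have hG2 : (2*R/3 - 2*σ) * |v - u| ≤ (2*R/3 - 2*σ) * σ :=
            mul_le_mul_of_nonneg_left hJ hw2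
          have hElb : (9/10) * (2*R/3 - 2*σ) ≤ E := by
            refine le_trans ?_ (le_max_left _ _)
            have hiR : 2*R/3 - 2*σ ≤ min i R := le_min (by linarith) (by linarith)
            linarith
          have hmul := mul_le_mul_of_nonneg_left hElb hc9
          have hq : (20*σ/9) * ((9/10) * (2*R/3 - 2*σ)) = 2*σ*(2*R/3 - 2*σ) := by ring
          rw [hq] at hmul
          nlinarith
        · -- left part of the support: only the first clamp moves
          have hv2 : v ≤ t - R/3 := by linarith
          have hGu := Gf_left (σ := σ) hR.le (le_of_lt (by linarith : u < t - R/3))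
          have hGv := Gf_left (σ := σ) hR.le hv2
          have hcd : clamp (t - 2*R/3) (t - R/3) v - clamp (t - 2*R/3) (t - R/3) u ≤ σ := by
            refine (clamp_diff_le ?_).trans hJ; linarith
          have hElb : (9/10) * (R/3) ≤ E := by
            refine le_trans ?_ (le_max_left _ _)
            have hiR : R/3 ≤ min i R := le_min (by linarith) (by linarith)
            linarith
          have hmul := mul_le_mul_of_nonneg_left hElb hc9
          have hq : (20*σ/9) * ((9/10) * (R/3)) = σ*(2*R/3) := by ring
          rw [hq] at hmul
          have hprod : (R/3) * (clamp (t - 2*R/3) (t - R/3) v - clamp (t - 2*R/3) (t - R/3) u)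
              ≤ (R/3) * σ := mul_le_mul_of_nonneg_left hcd hw1
          rw [hGu, hGv]
          nlinarith
    · -- projection parameter right of `t`
      rcases le_or_gt (t + 2*R/3) u with h20 | h2in
      · have hGu : Gf t R σ u = 2*R^2/3 - 4*σ*R/3 := Gf_eq_max hR.le h20
        have hGv : Gf t R σ v ≤ 2*R^2/3 - 4*σ*R/3 := Gf_le_max hσ.le h12
        linarith
      · have hJ : |v - u| ≤ 2*σ := hK2 hdi (by linarith)
        have hmu : |u - t| = u - t := abs_of_nonneg (by linarith)
        rw [hmu] at hFm
        rcases le_or_gt u (t + R/3 + 2*σ) with h2i | h2ii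
        · -- central zone
          have hG := Gf_lip (t := t) (u := u) (v := v) hσ.le h12
          have hG2 : (2*R/3 - 2*σ) * |v - u| ≤ (2*R/3 - 2*σ) * (2*σ) :=
            mul_le_mul_of_nonneg_left hJ hw2
          have hElb : (9/10) * (2*R/3 - 2*σ) ≤ E := by
            refine le_trans ?_ (le_max_left _ _)
            have hiR : 2*R/3 - 2*σ ≤ min i R := le_min (by linarith) (by linarith)
            linarith
          have hmul := mul_le_mul_of_nonneg_left hElb hc9
          have hq : (20*σ/9) * ((9/10) * (2*R/3 - 2*σ)) = 2*σ*(2*R/3 - 2*σ) := by ring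
          rw [hq] at hmul
          nlinarith
        · -- right part of the support: only the last clamp moves
          have hv2 : t + R/3 ≤ v := by linarith
          have hGu := Gf_right (σ := σ) hR.le (by linarith : t + R/3 ≤ u)
          have hGv := Gf_right (σ := σ) hR.le hv2
          have hcd : clamp (t + R/3) (t + 2*R/3) v - clamp (t + R/3) (t + 2*R/3) u ≤ 2*σ := by
            refine (clamp_diff_le ?_).trans hJ; linarith
          have hElb : (9/10) * (R/3) ≤ E := by
            refine le_trans ?_ (le_max_left _ _)
            have hiR : R/3 ≤ min i R := le_min (by linarith) (by linarith)
            linarith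
          have hmul := mul_le_mul_of_nonneg_left hElb hc9
          have hq : (20*σ/9) * ((9/10) * (R/3)) = σ*(2*R/3) := by ring
          rw [hq] at hmul
          have hprod : (R/3) * (clamp (t + R/3) (t + 2*R/3) v - clamp (t + R/3) (t + 2*R/3) u)
              ≤ (R/3) * (2*σ) := mul_le_mul_of_nonneg_left hcd hw1
          rw [hGu, hGv]
          nlinarith


/-- A nonnegative concave function on `[0,∞)` grows at most linearly:
`κ((5/3)t) ≤ (5/3)κ(t)`. -/
lemma kappa_scale {κ : ℝ → ℝ} (h0 : (0:ℝ) ≤ κ 0) (hconc : ConcaveOn ℝ (Ici 0) κ)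
    {t : ℝ} (ht : 0 ≤ t) : κ ((5/3)*t) ≤ (5/3) * κ t := by
  have h := hconc.2 (mem_Ici.2 le_rfl) (mem_Ici.2 (by positivity : (0:ℝ) ≤ (5/3)*t))
    (by norm_num : (0:ℝ) ≤ (2/5:ℝ)) (by norm_num : (0:ℝ) ≤ (3/5:ℝ)) (by norm_num)
  simp only [smul_eq_mul] at h
  have harg : (2/5:ℝ) * (0:ℝ) + (3/5:ℝ) * ((5/3)*t) = t := by ring
  rw [harg] at h
  linarith

end SLDivAux

set_option maxHeartbeats 1000000 in
/-- Theorem 3.11. The κ-lower divergence of a `κ`-contracting geodesic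
ray (with contracting constant `c`) satisfies `div_κ(r) ≥ r²/(4c) − r` for every `r > 0`;
in particular it is at least quadratic. -/
theorem divergence_of_contracting_at_least_quadratic
    {X : Type*} [MetricSpace X] [ProperSpace X] (hX : IsCAT0 X)
    (o : X) (κ : ℝ → ℝ) (hκ : IsSublinearFn κ)
    (b : ℝ → X) (hb : IsGeodesicRay b) (hb0 : b 0 = o)
    (π : X → X) (hπ : IsProj b π)
    (c : ℝ) (hcpos : 0 < c) (hc : KappaContractingWith κ o b π c) :
    ∀ r : ℝ, 0 < r → ENNReal.ofReal (r ^ 2 / (4 * c) - r) ≤ divKappa κ b r := by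
  classical
  intro r hr
  rcases le_or_gt (r ^ 2 / (4 * c) - r) 0 with hq | hq
  · rw [ENNReal.ofReal_eq_zero.2 hq]; exact zero_le
  have hc0 : (0:ℝ) ≤ c := hc.1
  simp only [divKappa]
  refine le_iInf fun t => le_iInf fun ht => ?_
  simp only [Set.mem_setOf_eq] at ht
  have hκ1 : (1:ℝ) ≤ κ t := hκ.one_le t
  have hκ0 : (0:ℝ) < κ t := by linarith
  set R : ℝ := r * κ t with hRdef
  set σ : ℝ := c * κ t with hσdef
  have hR0 : 0 < R := by rw [hRdef]; positivity
  have hσ0 : 0 < σ := by rw [hσdef]; positivity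
  have ht0 : (0:ℝ) < t := lt_trans hR0 ht
  have htR0 : (0:ℝ) ≤ t - R := by linarith
  -- generic facts about the ray and the projection
  have hno : ∀ s : ℝ, 0 ≤ s → dist o (b s) = s := by
    intro s hs
    rw [← hb0, hb 0 s le_rfl hs, zero_sub, abs_neg, abs_of_nonneg hs]
  have hπb : ∀ x : X, π x = b (dist o (π x)) := by
    intro x
    obtain ⟨p, hp, hbp⟩ := (hπ x).1
    have hU : dist o (π x) = p := by rw [← hbp, hno p hp]
    rw [hU, hbp]
  have hU0 : ∀ x : X, 0 ≤ dist o (π x) := fun x => dist_nonneg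
  have hIdist : ∀ x : X, dist x (π x) = infDist x (rayIm b) := fun x => (hπ x).2
  have hF1 : ∀ x : X, dist x (b t) ≤ infDist x (rayIm b) + |dist o (π x) - t| := by
    intro x
    calc dist x (b t) ≤ dist x (π x) + dist (π x) (b t) := dist_triangle _ _ _
      _ = infDist x (rayIm b) + |dist o (π x) - t| := by
          rw [hIdist x]
          congr 1
          conv_lhs => rw [hπb x]
          exact hb _ t (hU0 x) ht0.le
  have hF3 : ∀ x y : X,
      |dist o (π y) - dist o (π x)| ≤ 2 * infDist x (rayIm b) + 2 * dist x y := by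
    intro x y
    have h1 : |dist o (π y) - dist o (π x)| = dist (π y) (π x) := by
      conv_rhs => rw [hπb x, hπb y]
      rw [hb _ _ (hU0 y) (hU0 x)]
    have h2 : dist (π y) (π x) ≤ dist (π y) y + dist y x + dist x (π x) :=
      dist_triangle4 _ _ _ _
    have h3 : infDist y (rayIm b) ≤ infDist x (rayIm b) + dist y x :=
      infDist_le_infDist_add_dist
    have h4 : dist (π y) y = infDist y (rayIm b) := by rw [dist_comm]; exact hIdist y
    have h5 : dist y x = dist x y := dist_comm y x
    rw [h1]
    have h6 := hIdist x
    linarith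
  have hF2 : ∀ x y : X, dist x y < infDist x (rayIm b) →
      |dist o (π y) - dist o (π x)| ≤ c * κ (dist o (π x)) := by
    intro x y hxy
    have h1 := hc.2 x y hxy
    have h2 : |dist o (π y) - dist o (π x)| = dist (π x) (π y) := by
      conv_rhs => rw [hπb x, hπb y]
      rw [hb _ _ (hU0 x) (hU0 y), abs_sub_comm]
    rw [h2]
    exact h1
  have hπend : ∀ s : ℝ, 0 ≤ s → π (b s) = b s := by
    intro s hs
    have h1 : infDist (b s) (rayIm b) = 0 := infDist_zero_of_mem ⟨s, hs, rfl⟩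
    have h2 : dist (b s) (π (b s)) = 0 := by rw [hIdist]; exact h1
    exact (dist_eq_zero.1 h2).symm
  -- the key estimate : each admissible path is long
  have key : ENNReal.ofReal ((r ^ 2 / (4 * c) - r) * κ t) ≤ rhoKappa κ b r t := by
    simp only [rhoKappa]
    refine le_iInf fun γ => le_iInf fun hγ => ?_
    obtain ⟨hcont, hγ0, hγ1, hout⟩ := hγ
    have hout' : ∀ s ∈ Icc (0:ℝ) 1, R ≤ dist (γ s) (b t) := by
      intro s hs
      by_contra hlt
      exact hout s hs (Metric.mem_ball.2 (lt_of_not_ge hlt))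
    rcases le_or_gt r (12*c) with hr12 | hr12
    · -- small `r`: the straight-line bound suffices
      have h2R : dist (γ 0) (γ 1) = 2*R := by
        rw [hγ0, hγ1, hb _ _ htR0 (by linarith)]
        rw [show t - R - (t + R) = -(2*R) by ring, abs_neg, abs_of_nonneg (by linarith)]
      have hT : (r ^ 2 / (4 * c) - r) * κ t ≤ 2*R := by
        have hdiv : r ^ 2 / (4*c) ≤ 3*r := by
          rw [div_le_iff₀ (by linarith : (0:ℝ) < 4*c)]
          nlinarith
        have := mul_le_mul_of_nonneg_right (show r ^ 2 / (4*c) - r ≤ 2*r by linarith) hκ0.le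
        rw [hRdef]
        nlinarith
      calc ENNReal.ofReal ((r ^ 2 / (4 * c) - r) * κ t) ≤ ENNReal.ofReal (2*R) :=
            ENNReal.ofReal_le_ofReal hT
        _ = edist (γ 0) (γ 1) := by rw [edist_dist, h2R]
        _ ≤ eVariationOn γ (Icc 0 1) :=
            eVariationOn.edist_le γ ⟨le_rfl, zero_le_one⟩ ⟨zero_le_one, le_rfl⟩
    · -- main case
      have h12 : 12*σ ≤ R := by
        rw [hRdef, hσdef]; nlinarith
      have hK1b : ∀ x : X, dist o (π x) ≤ t → c * κ (dist o (π x)) ≤ σ := by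
        intro x hx
        rw [hσdef]
        exact mul_le_mul_of_nonneg_left (hκ.mono hx) hc0
      have hK2b : ∀ x : X, dist o (π x) ≤ t + 2*R/3 → c * κ (dist o (π x)) ≤ 2*σ := by
        intro x hx
        have h1 : κ (dist o (π x)) ≤ κ ((5/3)*t) := hκ.mono (by linarith)
        have h2 : κ ((5/3)*t) ≤ (5/3) * κ t :=
          SLDivAux.kappa_scale (by linarith [hκ.one_le 0]) hκ.concave ht0.le
        have h3 := mul_le_mul_of_nonneg_left (h1.trans h2) hc0
        rw [hσdef]
        nlinarith
      -- the step-length function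
      set Ef : X → ℝ :=
        fun x => max ((9/10) * min (infDist x (rayIm b)) R) (9*σ/40) with hEfdef
      have hEfpos : ∀ x, 0 < Ef x :=
        fun x => lt_of_lt_of_le (by positivity) (le_max_right _ _)
      have hEfub : ∀ x, Ef x ≤ (9/10)*R := by
        intro x
        apply max_le
        · have h1 : min (infDist x (rayIm b)) R ≤ R := min_le_right _ _
          have h2 : (0:ℝ) ≤ infDist x (rayIm b) := infDist_nonneg
          have h3 : (0:ℝ) ≤ min (infDist x (rayIm b)) R := le_min h2 hR0.le
          linarith
        · linarith
      -- the greedy step function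
      set nxt : ℝ → ℝ := fun sj =>
        if h : {s | s ∈ Icc sj 1 ∧ dist (γ s) (γ sj) = Ef (γ sj)}.Nonempty then h.some
        else 1 with hnxtdef
      have hnxt : ∀ sj ∈ Icc (0:ℝ) 1, nxt sj ∈ Icc sj 1 ∧
          dist (γ (nxt sj)) (γ sj) ≤ Ef (γ sj) ∧
          (nxt sj ≠ 1 → dist (γ (nxt sj)) (γ sj) = Ef (γ sj)) := by
        intro sj hsj
        by_cases h : {s | s ∈ Icc sj 1 ∧ dist (γ s) (γ sj) = Ef (γ sj)}.Nonempty
        · simp only [hnxtdef, dif_pos h]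
          obtain ⟨hmem, heq⟩ := h.some_mem
          exact ⟨hmem, le_of_eq heq, fun _ => heq⟩
        · simp only [hnxtdef, dif_neg h]
          refine ⟨⟨hsj.2, le_rfl⟩, ?_, fun hne => absurd rfl hne⟩
          by_contra hgt
          push_neg at hgt
          apply h
          have hsub : Icc sj 1 ⊆ Icc (0:ℝ) 1 := Icc_subset_Icc hsj.1 le_rfl
          have hconts : ContinuousOn (fun s => dist (γ s) (γ sj)) (Icc sj 1) :=
            continuous_dist.comp_continuousOn ((hcont.mono hsub).prodMk continuousOn_const)
          have hivt := intermediate_value_Icc hsj.2 hconts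
          have hmem : Ef (γ sj) ∈ Icc (dist (γ sj) (γ sj)) (dist (γ 1) (γ sj)) := by
            rw [dist_self]
            exact ⟨(hEfpos _).le, hgt.le⟩
          obtain ⟨s, hs, hfs⟩ := hivt hmem
          exact ⟨s, hs, hfs⟩
      -- the greedy sequence of times
      set sq : ℕ → ℝ := fun n => nxt^[n] 0 with hsqdef
      have hsq0 : sq 0 = 0 := rfl
      have hsqS : ∀ n, sq (n+1) = nxt (sq n) := by
        intro n
        simp only [hsqdef]
        exact Function.iterate_succ_apply' nxt n 0
      have hsqmem : ∀ n, sq n ∈ Icc (0:ℝ) 1 := by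
        intro n
        induction n with
        | zero => exact ⟨le_rfl, zero_le_one⟩
        | succ n ih =>
          rw [hsqS]
          have h := (hnxt _ ih).1
          exact ⟨le_trans ih.1 h.1, h.2⟩
      have hstep : ∀ n, sq n ≤ sq (n+1) := by
        intro n
        rw [hsqS]
        exact ((hnxt _ (hsqmem n)).1).1
      have hmono : Monotone sq := monotone_nat_of_le_succ hstep
      have hdle : ∀ n, dist (γ (sq (n+1))) (γ (sq n)) ≤ Ef (γ (sq n)) := by
        intro n
        rw [hsqS]
        exact (hnxt _ (hsqmem n)).2.1
      have hfull : ∀ n, sq (n+1) ≠ 1 →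
          dist (γ (sq (n+1))) (γ (sq n)) = Ef (γ (sq n)) := by
        intro n h
        rw [hsqS] at h ⊢
        exact (hnxt _ (hsqmem n)).2.2 h
      -- termination of the greedy process
      have hterm : ∃ n, sq n = 1 := by
        by_contra hno1
        push_neg at hno1
        have hfull' : ∀ n, dist (γ (sq (n+1))) (γ (sq n)) = Ef (γ (sq n)) :=
          fun n => hfull n (hno1 (n+1))
        have hbdd : BddAbove (Set.range sq) := ⟨1, by rintro _ ⟨n, rfl⟩; exact (hsqmem n).2⟩
        have hlim := tendsto_atTop_ciSup hmono hbdd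
        have hs'mem : (⨆ n, sq n) ∈ Icc (0:ℝ) 1 :=
          ⟨le_trans (le_of_eq hsq0.symm) (le_ciSup hbdd 0), ciSup_le fun n => (hsqmem n).2⟩
        have hγc : ContinuousWithinAt γ (Icc 0 1) (⨆ n, sq n) := hcont _ hs'mem
        have htend : Tendsto (fun n => γ (sq n)) atTop (nhds (γ (⨆ n, sq n))) :=
          hγc.tendsto.comp (tendsto_nhdsWithin_iff.2 ⟨hlim, Eventually.of_forall hsqmem⟩)
        have htend1 : Tendsto (fun n => γ (sq (n+1))) atTop (nhds (γ (⨆ n, sq n))) :=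
          htend.comp (tendsto_add_atTop_nat 1)
        have hdist0 : Tendsto (fun n => dist (γ (sq (n+1))) (γ (sq n))) atTop (nhds 0) := by
          simpa using htend1.dist htend
        have hev := hdist0.eventually (gt_mem_nhds (show (0:ℝ) < 9*σ/40 by positivity))
        obtain ⟨n, hn⟩ := hev.exists
        have hge : 9*σ/40 ≤ dist (γ (sq (n+1))) (γ (sq n)) := by
          rw [hfull' n]
          exact le_max_right _ _
        linarith
      set N := Nat.find hterm with hNdef
      have hN : sq N = 1 := Nat.find_spec hterm
      have hNmin : ∀ m, m < N → sq m ≠ 1 := fun m hm => Nat.find_min hterm hm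
      have hNpos : N ≠ 0 := by
        intro h
        rw [h, hsq0] at hN
        exact zero_ne_one hN
      obtain ⟨M, hM⟩ := Nat.exists_eq_succ_of_ne_zero hNpos
      -- the per-step weight estimate
      have hGstep : ∀ n,
          SLDivAux.Gf t R σ (dist o (π (γ (sq (n+1))))) -
            SLDivAux.Gf t R σ (dist o (π (γ (sq n)))) ≤ (20*σ/9) * Ef (γ (sq n)) := by
        intro n
        have hd := hdle n
        rw [dist_comm] at hd
        have hEf : Ef (γ (sq n)) =
            max ((9/10) * min (infDist (γ (sq n)) (rayIm b)) R) (9*σ/40) := by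
          rw [hEfdef]
        rw [hEf] at hd ⊢
        refine SLDivAux.step_bound hσ0 h12 ?_ ?_ ?_ ?_ infDist_nonneg dist_nonneg hd
        · exact le_trans (hout' _ (hsqmem n)) (hF1 _)
        · exact hF3 _ _
        · intro hdi hu
          exact le_trans (hF2 _ _ hdi) (hK1b _ hu)
        · intro hdi hu
          exact le_trans (hF2 _ _ hdi) (hK2b _ hu)
      -- endpoints of the weight function
      have hG0 : SLDivAux.Gf t R σ (dist o (π (γ (sq 0)))) = 0 := by
        rw [hsq0, hγ0, hπend _ htR0, hno _ htR0]
        exact SLDivAux.Gf_eq_zero hR0.le (by linarith)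
      have hGN : SLDivAux.Gf t R σ (dist o (π (γ (sq N)))) = 2*R^2/3 - 4*σ*R/3 := by
        rw [hN, hγ1, hπend _ (by linarith), hno _ (by linarith)]
        exact SLDivAux.Gf_eq_max hR0.le (by linarith)
      -- summing up
      have htel := Finset.sum_range_sub (fun j => SLDivAux.Gf t R σ (dist o (π (γ (sq j))))) N
      have hsum1 : 2*R^2/3 - 4*σ*R/3 ≤ ∑ j ∈ Finset.range N, (20*σ/9) * Ef (γ (sq j)) := by
        have h1 : 2*R^2/3 - 4*σ*R/3 =
            ∑ j ∈ Finset.range N,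
              (SLDivAux.Gf t R σ (dist o (π (γ (sq (j+1))))) -
                SLDivAux.Gf t R σ (dist o (π (γ (sq j))))) := by
          rw [htel, hGN, hG0]
          ring
        rw [h1]
        exact Finset.sum_le_sum fun j _ => hGstep j
      set D := ∑ j ∈ Finset.range N, dist (γ (sq (j+1))) (γ (sq j)) with hDdef
      have hsum2 : ∑ j ∈ Finset.range N, Ef (γ (sq j)) ≤ D + (9/10)*R := by
        rw [hDdef, hM, Finset.sum_range_succ, Finset.sum_range_succ]
        have h1 : ∑ j ∈ Finset.range M, Ef (γ (sq j)) =
            ∑ j ∈ Finset.range M, dist (γ (sq (j+1))) (γ (sq j)) := by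
          refine Finset.sum_congr rfl fun j hj => ?_
          have hj' : j + 1 < N := by
            rw [hM]
            exact Nat.succ_lt_succ (Finset.mem_range.1 hj)
          exact (hfull j (hNmin (j+1) hj')).symm
        rw [h1]
        have h2 : Ef (γ (sq M)) ≤ (9/10)*R := hEfub _
        have h3 : 0 ≤ dist (γ (sq (M+1))) (γ (sq M)) := dist_nonneg
        linarith
      have hDnn : 0 ≤ D := Finset.sum_nonneg fun j _ => dist_nonneg
      -- the final real-number computation
      have hDlb : (r ^ 2 / (4 * c) - r) * κ t ≤ D := by
        have ha : 2*R^2/3 - 4*σ*R/3 ≤ (20*σ/9) * (D + (9/10)*R) := by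
          rw [← Finset.mul_sum] at hsum1
          have hmul := mul_le_mul_of_nonneg_left hsum2 (show (0:ℝ) ≤ 20*σ/9 by linarith)
          linarith
        have hT20 : (r ^ 2 / (4 * c) - r) * κ t * (20*σ/9) =
            (5/9)*R^2 - (20/9)*σ*R := by
          rw [hRdef, hσdef]
          field_simp
          ring
        have hRR : 12*σ*R ≤ R^2 := by nlinarith
        have hfin : (r ^ 2 / (4 * c) - r) * κ t * (20*σ/9) ≤ D * (20*σ/9) := by
          rw [hT20]
          nlinarith
        exact le_of_mul_le_mul_right hfin (by positivity)
      -- convert to the extended-real variation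
      have hDsum : ENNReal.ofReal ((r ^ 2 / (4 * c) - r) * κ t) ≤
          ∑ j ∈ Finset.range N, edist (γ (sq (j+1))) (γ (sq j)) := by
        have h1 : ∑ j ∈ Finset.range N, edist (γ (sq (j+1))) (γ (sq j)) =
            ENNReal.ofReal D := by
          rw [hDdef, ENNReal.ofReal_sum_of_nonneg fun i _ => dist_nonneg]
          simp only [edist_dist]
        rw [h1]
        exact ENNReal.ofReal_le_ofReal hDlb
      exact le_trans hDsum (eVariationOn.sum_le (f := γ) (n := N) hmono hsqmem)
  -- conclude by dividing by `κ t`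
  have hne0 : ENNReal.ofReal (κ t) ≠ 0 := by
    simp only [ne_eq, ENNReal.ofReal_eq_zero, not_le]
    linarith
  rw [ENNReal.le_div_iff_mul_le (Or.inl hne0) (Or.inl ENNReal.ofReal_ne_top),
    ← ENNReal.ofReal_mul hq.le]
  exact key
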